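/- Forward direction of Theorem 2.1 in the trigonometric case: let z, k ∈ ℂ with sinh z ≠ 0; let x_i : ℝ → ℂ be differentiable with sinh(x_i(t) − x_j(t)) ≠ 0 for i ≠ j; let a_i, b_i : ℝ → ℂˡ and c_i : ℝ → ℂ be differentiable; let λ_i : ℝ → ℂ; set f_{ij} = b_i·a_j. Assume for all t: (i) b_i·a_i = 2; (ii) (ẋ_i − 2coth z + 2k)c_i + Σ_{j≠i} f_{ij}(coth(x_i−x_j) − coth z)c_j = 0; (iii) ċ_i = λ_i c_i + Σ_{j≠i} f_{ij} c_j/sinh²(x_i−x_j); (iv) ȧ_i = −λ_i a_i − Σ_{j≠i} a_j f_{ji}/sinh²(x_i−x_j); (v) ḃ_i = λ_i b_i + Σ_{j≠i} b_j f_{ij}/sinh²(x_i−x_j). Then the ℂˡ-valued function Ψ(x,t) = Σ_{i=1}^N c_i(t)·a_i(t)·(coth(x−x_i(t)) − coth z)·e^{kx+k²t} satisfies ∂_t Ψ(x,t) − ∂²_x Ψ(x,t) + Σ_{i=1}^N a_i(t)·(b_i(t)·Ψ(x,t))/sinh²(x−x_i(t)) = 0 at every (x,t) with sinh(x − x_i(t))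 ≠ 0 for all i. -/

import Mathlib

open Finset

open Complex in
lemma trig_key (u v : ℂ) (hu : Complex.sinh u ≠ 0) (hv : Complex.sinh v ≠ 0)
    (hw : Complex.sinh (v - u) ≠ 0) :
    (Complex.cosh u / Complex.sinh u - Complex.cosh v / Complex.sinh v)
        / Complex.sinh (v - u) ^ 2
      + (Complex.cosh v / Complex.sinh v - Complex.cosh (v - u) / Complex.sinh (v - u))
        / Complex.sinh u ^ 2 = 0 := by
  field_simp
  rw [Complex.sinh_sub, Complex.cosh_sub]
  ring_nf
  linear_combination (Complex.sinh u^2*Complex.cosh v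
    - Complex.sinh u*Complex.cosh u*Complex.sinh v) * (Complex.cosh_sq_sub_sinh_sq v)

/-- derivative of coth at a point where sinh ≠ 0 (for ℂ → ℂ shifted). -/
lemma hasDerivAt_coth_shift (d : ℂ) {y : ℂ} (hy : Complex.sinh (y - d) ≠ 0) :
    HasDerivAt (fun w : ℂ => Complex.cosh (w - d) / Complex.sinh (w - d))
      (-(1 / Complex.sinh (y - d) ^ 2)) y := by
  have h1 : HasDerivAt (fun w : ℂ => w - d) 1 y := (hasDerivAt_id y).sub_const d
  have hc : HasDerivAt (fun w : ℂ => Complex.cosh (w - d)) (Complex.sinh (y - d)) y := by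
    simpa using h1.ccosh
  have hs : HasDerivAt (fun w : ℂ => Complex.sinh (w - d)) (Complex.cosh (y - d)) y := by
    simpa using h1.csinh
  have := hc.fun_div hs hy
  refine this.congr_deriv ?_
  field_simp
  linear_combination (-1 : ℂ) * Complex.cosh_sq_sub_sinh_sq (y - d)

lemma hasDerivAt_invsinhsq (d : ℂ) {y : ℂ} (hy : Complex.sinh (y - d) ≠ 0) :
    HasDerivAt (fun w : ℂ => 1 / Complex.sinh (w - d) ^ 2)
      (-(2 * Complex.cosh (y - d) / Complex.sinh (y - d) ^ 3)) y := by
  have h1 : HasDerivAt (fun w : ℂ => w - d) 1 y := (hasDerivAt_id y).sub_const d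
  have hs : HasDerivAt (fun w : ℂ => Complex.sinh (w - d)) (Complex.cosh (y - d)) y := by
    simpa using h1.csinh
  have hsq : HasDerivAt (fun w : ℂ => Complex.sinh (w - d) ^ 2)
      (2 * Complex.sinh (y - d) * Complex.cosh (y - d)) y := by
    have := hs.fun_mul hs
    refine (this.congr_of_eventuallyEq (Filter.Eventually.of_forall fun w => by ring)).congr_deriv ?_
    ring
  have hne : Complex.sinh (y - d) ^ 2 ≠ 0 := pow_ne_zero _ hy
  have := (hasDerivAt_const y (1:ℂ)).fun_div hsq hne
  refine this.congr_deriv ?_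
  field_simp
  ring

/-- first x-derivative of the ansatz -/
lemma hasDerivAt_psi_x {N l : ℕ} (d co : Fin N → ℂ) (v : Fin N → Fin l → ℂ) (k e cz : ℂ)
    {y : ℂ} (hy : ∀ i, Complex.sinh (y - d i) ≠ 0) :
    HasDerivAt (fun w : ℂ => ∑ i : Fin N,
        (co i * (Complex.cosh (w - d i) / Complex.sinh (w - d i) - cz)
          * Complex.exp (k * w + e)) • v i)
      (∑ i : Fin N,
        ((co i * (-(1 / Complex.sinh (y - d i) ^ 2))
            + co i * (Complex.cosh (y - d i) / Complex.sinh (y - d i) - cz) * k)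
          * Complex.exp (k * y + e)) • v i) y := by
  apply HasDerivAt.fun_sum
  intro i _
  have h1 : HasDerivAt (fun w : ℂ => co i * (Complex.cosh (w - d i) / Complex.sinh (w - d i) - cz))
      (co i * (-(1 / Complex.sinh (y - d i) ^ 2))) y :=
    ((hasDerivAt_coth_shift (d i) (hy i)).sub_const cz).const_mul (co i)
  have hexp : HasDerivAt (fun w : ℂ => Complex.exp (k * w + e))
      (Complex.exp (k * y + e) * k) y := by
    have hin : HasDerivAt (fun w : ℂ => k * w + e) k y := by
      simpa using ((hasDerivAt_id y).const_mul k).add_const e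
    simpa using hin.cexp
  have := (h1.mul hexp).smul_const (v i)
  exact this.congr_deriv (congrArg (· • v i) (by ring))

/-- second x-derivative of the ansatz -/
lemma hasDerivAt_psi_xx {N l : ℕ} (d co : Fin N → ℂ) (v : Fin N → Fin l → ℂ) (k e cz : ℂ)
    {y : ℂ} (hy : ∀ i, Complex.sinh (y - d i) ≠ 0) :
    HasDerivAt (fun w : ℂ => ∑ i : Fin N,
        ((co i * (-(1 / Complex.sinh (w - d i) ^ 2))
            + co i * (Complex.cosh (w - d i) / Complex.sinh (w - d i) - cz) * k)
          * Complex.exp (k * w + e)) • v i)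
      (∑ i : Fin N,
        (co i * (2 * Complex.cosh (y - d i) / Complex.sinh (y - d i) ^ 3
            - 2 * k * (1 / Complex.sinh (y - d i) ^ 2)
            + k ^ 2 * (Complex.cosh (y - d i) / Complex.sinh (y - d i) - cz))
          * Complex.exp (k * y + e)) • v i) y := by
  apply HasDerivAt.fun_sum
  intro i _
  have h1 : HasDerivAt (fun w : ℂ =>
      co i * (-(1 / Complex.sinh (w - d i) ^ 2))
        + co i * (Complex.cosh (w - d i) / Complex.sinh (w - d i) - cz) * k)
      (co i * (2 * Complex.cosh (y - d i) / Complex.sinh (y - d i) ^ 3)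
        + co i * (-(1 / Complex.sinh (y - d i) ^ 2)) * k) y := by
    have ha := ((hasDerivAt_invsinhsq (d i) (hy i)).neg).const_mul (co i)
    have hb := (((hasDerivAt_coth_shift (d i) (hy i)).sub_const cz).const_mul (co i)).mul_const k
    have := ha.add hb
    exact this.congr_deriv (by ring)
  have hexp : HasDerivAt (fun w : ℂ => Complex.exp (k * w + e))
      (Complex.exp (k * y + e) * k) y := by
    have hin : HasDerivAt (fun w : ℂ => k * w + e) k y := by
      simpa using ((hasDerivAt_id y).const_mul k).add_const e
    simpa using hin.cexp
  have := (h1.mul hexp).smul_const (v i)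
  exact this.congr_deriv (congrArg (· • v i) (by ring))


lemma hasDerivAt_coth' {u : ℂ} (hu : Complex.sinh u ≠ 0) :
    HasDerivAt (fun w : ℂ => Complex.cosh w / Complex.sinh w) (-(1 / Complex.sinh u ^ 2)) u := by
  have := (Complex.hasDerivAt_cosh u).fun_div (Complex.hasDerivAt_sinh u) hu
  refine this.congr_deriv ?_
  field_simp
  linear_combination (-1 : ℂ) * Complex.cosh_sq_sub_sinh_sq u

lemma hasDerivAt_psi_t {N l : ℕ} (x cz k : ℂ) (X : Fin N → ℝ → ℂ) (xd : Fin N → ℂ)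
    (c : Fin N → ℝ → ℂ) (cd : Fin N → ℂ)
    (a : Fin N → ℝ → Fin l → ℂ) (ad : Fin N → Fin l → ℂ) (t : ℝ)
    (hX : ∀ i, HasDerivAt (X i) (xd i) t) (hc : ∀ i, HasDerivAt (c i) (cd i) t)
    (ha : ∀ i, HasDerivAt (a i) (ad i) t)
    (hs : ∀ i, Complex.sinh (x - X i t) ≠ 0) :
    HasDerivAt (fun s : ℝ => ∑ i : Fin N,
        (c i s * (Complex.cosh (x - X i s) / Complex.sinh (x - X i s) - cz)
          * Complex.exp (k * x + k ^ 2 * s)) • a i s)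
      (∑ i : Fin N,
        ((c i t * (Complex.cosh (x - X i t) / Complex.sinh (x - X i t) - cz)
            * Complex.exp (k * x + k ^ 2 * t)) • ad i
          + ((cd i * (Complex.cosh (x - X i t) / Complex.sinh (x - X i t) - cz)
              + c i t * (xd i / Complex.sinh (x - X i t) ^ 2)
              + c i t * (Complex.cosh (x - X i t) / Complex.sinh (x - X i t) - cz) * k ^ 2)
              * Complex.exp (k * x + k ^ 2 * t)) • a i t)) t := by
  apply HasDerivAt.fun_sum
  intro i _
  -- inner function s ↦ x - X i s
  have hin : HasDerivAt (fun s : ℝ => x - X i s) (-(xd i)) t := by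
    simpa using (hX i).const_sub x
  -- coth composed
  have hcoth : HasDerivAt (fun s : ℝ =>
      Complex.cosh (x - X i s) / Complex.sinh (x - X i s))
      (xd i / Complex.sinh (x - X i t) ^ 2) t := by
    have := (hasDerivAt_coth' (hs i)).scomp t hin
    refine this.congr_deriv ?_
    rw [smul_eq_mul]
    ring
  have hphi : HasDerivAt (fun s : ℝ =>
      Complex.cosh (x - X i s) / Complex.sinh (x - X i s) - cz)
      (xd i / Complex.sinh (x - X i t) ^ 2) t := hcoth.sub_const cz
  -- exponential
  have hexp : HasDerivAt (fun s : ℝ => Complex.exp (k * x + k ^ 2 * s))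
      (Complex.exp (k * x + k ^ 2 * t) * k ^ 2) t := by
    have hre : HasDerivAt (fun s : ℝ => (s : ℂ)) 1 t := by
      exact Complex.ofRealCLM.hasDerivAt
    have hin2 : HasDerivAt (fun s : ℝ => k * x + k ^ 2 * (s : ℂ)) (k ^ 2) t := by
      simpa using (hre.const_mul (k ^ 2)).const_add (k * x)
    simpa using hin2.cexp
  -- scalar part
  have hm : HasDerivAt (fun s : ℝ =>
      c i s * (Complex.cosh (x - X i s) / Complex.sinh (x - X i s) - cz)
        * Complex.exp (k * x + k ^ 2 * s))
      ((cd i * (Complex.cosh (x - X i t) / Complex.sinh (x - X i t) - cz)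
          + c i t * (xd i / Complex.sinh (x - X i t) ^ 2)
          + c i t * (Complex.cosh (x - X i t) / Complex.sinh (x - X i t) - cz) * k ^ 2)
        * Complex.exp (k * x + k ^ 2 * t)) t := by
    have := ((hc i).fun_mul hphi).fun_mul hexp
    exact this.congr_deriv (by ring)
  exact hm.smul (ha i)

lemma erase_sum_swap {M : Type*} [AddCommMonoid M] {n : ℕ} (f : Fin n → Fin n → M) :
    ∑ i : Fin n, ∑ j ∈ Finset.univ.erase i, f i j
      = ∑ i : Fin n, ∑ j ∈ Finset.univ.erase i, f j i := by
  rw [Finset.sum_comm' (t' := Finset.univ) (s' := fun j => Finset.univ.erase j)]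
  intro i j
  simp [Finset.mem_erase, ne_comm, eq_comm, and_comm]


/-- Forward direction of Theorem 2.1 in the trigonometric case: the ansatz
`Ψ = Σᵢ cᵢ(t)·aᵢ(t)·Φ(x−xᵢ(t),z)·e^{kx+k²t}` built from a solution of the
Lax equations solves the matrix Schrödinger equation
`∂_tΨ − ∂²_xΨ + Σᵢ aᵢ(bᵢ·Ψ)V(x−xᵢ) = 0` with `V(x) = 1/sinh²x`,
`Φ(x,z) = coth x − coth z`. -/
theorem trigonometric_schroedinger_solution (N l : ℕ) (z k : ℂ)
    (hz : Complex.sinh z ≠ 0)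
    (X x' : Fin N → ℝ → ℂ) (a b : Fin N → ℝ → Fin l → ℂ)
    (c : Fin N → ℝ → ℂ) (lam : Fin N → ℝ → ℂ)
    (hXne : ∀ (t : ℝ) (i j : Fin N), i ≠ j → Complex.sinh (X i t - X j t) ≠ 0)
    (hX : ∀ (i : Fin N) (t : ℝ), HasDerivAt (X i) (x' i t) t)
    (hba : ∀ (i : Fin N) (t : ℝ), (∑ α : Fin l, b i t α * a i t α) = 2)
    (heig : ∀ (i : Fin N) (t : ℝ),
      (x' i t - 2 * (Complex.cosh z / Complex.sinh z) + 2 * k) * c i t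
        + ∑ j ∈ Finset.univ.erase i,
            (∑ α : Fin l, b i t α * a j t α)
              * (Complex.cosh (X i t - X j t) / Complex.sinh (X i t - X j t)
                  - Complex.cosh z / Complex.sinh z) * c j t = 0)
    (hc : ∀ (i : Fin N) (t : ℝ), HasDerivAt (c i)
      (lam i t * c i t + ∑ j ∈ Finset.univ.erase i,
        (∑ α : Fin l, b i t α * a j t α) * c j t
          / Complex.sinh (X i t - X j t) ^ 2) t)
    (ha : ∀ (i : Fin N) (t : ℝ), HasDerivAt (a i)
      (-(lam i t) • a i t - ∑ j ∈ Finset.univ.erase i,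
        ((∑ α : Fin l, b j t α * a i t α)
          / Complex.sinh (X i t - X j t) ^ 2) • a j t) t)
    (hb : ∀ (i : Fin N) (t : ℝ), HasDerivAt (b i)
      (lam i t • b i t + ∑ j ∈ Finset.univ.erase i,
        ((∑ α : Fin l, b i t α * a j t α)
          / Complex.sinh (X i t - X j t) ^ 2) • b j t) t) :
    let Ψ : ℂ → ℝ → Fin l → ℂ := fun x t =>
      ∑ i : Fin N,
        (c i t * (Complex.cosh (x - X i t) / Complex.sinh (x - X i t)
              - Complex.cosh z / Complex.sinh z)
          * Complex.exp (k * x + k ^ 2 * t)) • a i t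
    ∀ (x : ℂ) (t : ℝ), (∀ i : Fin N, Complex.sinh (x - X i t) ≠ 0) →
      deriv (fun s : ℝ => Ψ x s) t
        - deriv (fun y : ℂ => deriv (fun y' : ℂ => Ψ y' t) y) x
        + ∑ i : Fin N,
            ((∑ α : Fin l, b i t α * Ψ x t α)
              / Complex.sinh (x - X i t) ^ 2) • a i t
      = 0 := by
  intro Ψ x t hx
  classical
  unfold Ψ
  -- t-derivative
  have hT := hasDerivAt_psi_t x (Complex.cosh z / Complex.sinh z) k X (fun i => x' i t) c
      (fun i => lam i t * c i t + ∑ j ∈ Finset.univ.erase i,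
        (∑ α : Fin l, b i t α * a j t α) * c j t / Complex.sinh (X i t - X j t) ^ 2)
      a (fun i => -(lam i t) • a i t - ∑ j ∈ Finset.univ.erase i,
        ((∑ α : Fin l, b j t α * a i t α)
          / Complex.sinh (X i t - X j t) ^ 2) • a j t)
      t (fun i => hX i t) (fun i => hc i t) (fun i => ha i t) hx
  rw [hT.deriv]
  -- x-derivatives
  have hev : ∀ᶠ y in nhds x, ∀ i, Complex.sinh (y - X i t) ≠ 0 := by
    rw [Filter.eventually_all]
    intro i
    exact ((Complex.continuous_sinh.comp (continuous_id.sub continuous_const)).continuousAt).eventually_ne (hx i)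
  have hD1ev : (deriv (fun y' : ℂ =>
      ∑ i : Fin N, (c i t * (Complex.cosh (y' - X i t) / Complex.sinh (y' - X i t)
              - Complex.cosh z / Complex.sinh z)
          * Complex.exp (k * y' + k ^ 2 * t)) • a i t)) =ᶠ[nhds x]
      (fun y : ℂ => ∑ i : Fin N,
        ((c i t * (-(1 / Complex.sinh (y - X i t) ^ 2))
            + c i t * (Complex.cosh (y - X i t) / Complex.sinh (y - X i t)
                - Complex.cosh z / Complex.sinh z) * k)
          * Complex.exp (k * y + k ^ 2 * t)) • a i t) := by
    filter_upwards [hev] with y hy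
    exact (hasDerivAt_psi_x (fun i => X i t) (fun i => c i t) (fun i => a i t)
      k (k ^ 2 * t) (Complex.cosh z / Complex.sinh z) hy).deriv
  have hD1eq : deriv (fun y : ℂ => deriv (fun y' : ℂ =>
      ∑ i : Fin N, (c i t * (Complex.cosh (y' - X i t) / Complex.sinh (y' - X i t)
              - Complex.cosh z / Complex.sinh z)
          * Complex.exp (k * y' + k ^ 2 * t)) • a i t) y) x
      = deriv (fun y : ℂ => ∑ i : Fin N,
        ((c i t * (-(1 / Complex.sinh (y - X i t) ^ 2))
            + c i t * (Complex.cosh (y - X i t) / Complex.sinh (y - X i t)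
                - Complex.cosh z / Complex.sinh z) * k)
          * Complex.exp (k * y + k ^ 2 * t)) • a i t) x :=
    hD1ev.deriv_eq
  rw [hD1eq]
  have hXX := hasDerivAt_psi_xx (fun i => X i t) (fun i => c i t) (fun i => a i t)
      k (k ^ 2 * t) (Complex.cosh z / Complex.sinh z) hx
  rw [hXX.deriv]
  funext α
  simp only [Pi.add_apply, Pi.sub_apply, Pi.zero_apply, Finset.sum_apply, Pi.smul_apply,
    smul_eq_mul, Pi.neg_apply]
  rw [← Finset.sum_sub_distrib, ← Finset.sum_add_distrib]
  have hsplitPsi : ∀ i : Fin N,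
      (∑ β : Fin l, b i t β * ∑ j : Fin N, c j t * (Complex.cosh (x - X j t) / Complex.sinh (x - X j t) - Complex.cosh z / Complex.sinh z) * Complex.exp (k * x + k ^ 2 * (t : ℂ)) * a j t β)
        = 2 * (c i t * (Complex.cosh (x - X i t) / Complex.sinh (x - X i t) - Complex.cosh z / Complex.sinh z) * Complex.exp (k * x + k ^ 2 * (t : ℂ)))
          + ∑ j ∈ Finset.univ.erase i, (∑ β : Fin l, b i t β * a j t β) * (c j t * (Complex.cosh (x - X j t) / Complex.sinh (x - X j t) - Complex.cosh z / Complex.sinh z) * Complex.exp (k * x + k ^ 2 * (t : ℂ))) := by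
    intro i
    calc (∑ β : Fin l, b i t β * ∑ j : Fin N, c j t * (Complex.cosh (x - X j t) / Complex.sinh (x - X j t) - Complex.cosh z / Complex.sinh z) * Complex.exp (k * x + k ^ 2 * (t : ℂ)) * a j t β)
        = ∑ β : Fin l, ∑ j : Fin N, c j t * (Complex.cosh (x - X j t) / Complex.sinh (x - X j t) - Complex.cosh z / Complex.sinh z) * Complex.exp (k * x + k ^ 2 * (t : ℂ)) * (b i t β * a j t β) := by
          refine Finset.sum_congr rfl fun β _ => ?_
          rw [Finset.mul_sum]
          exact Finset.sum_congr rfl fun j _ => by ring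
      _ = ∑ j : Fin N, ∑ β : Fin l, c j t * (Complex.cosh (x - X j t) / Complex.sinh (x - X j t) - Complex.cosh z / Complex.sinh z) * Complex.exp (k * x + k ^ 2 * (t : ℂ)) * (b i t β * a j t β) :=
          Finset.sum_comm
      _ = ∑ j : Fin N, c j t * (Complex.cosh (x - X j t) / Complex.sinh (x - X j t) - Complex.cosh z / Complex.sinh z) * Complex.exp (k * x + k ^ 2 * (t : ℂ)) * (∑ β : Fin l, b i t β * a j t β) :=
          Finset.sum_congr rfl fun j _ => (Finset.mul_sum _ _ _).symm
      _ = c i t * (Complex.cosh (x - X i t) / Complex.sinh (x - X i t) - Complex.cosh z / Complex.sinh z) * Complex.exp (k * x + k ^ 2 * (t : ℂ)) * (∑ β : Fin l, b i t β * a i t β)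
            + ∑ j ∈ Finset.univ.erase i, c j t * (Complex.cosh (x - X j t) / Complex.sinh (x - X j t) - Complex.cosh z / Complex.sinh z) * Complex.exp (k * x + k ^ 2 * (t : ℂ)) * (∑ β : Fin l, b i t β * a j t β) :=
          (Finset.add_sum_erase _ _ (Finset.mem_univ i)).symm
      _ = 2 * (c i t * (Complex.cosh (x - X i t) / Complex.sinh (x - X i t) - Complex.cosh z / Complex.sinh z) * Complex.exp (k * x + k ^ 2 * (t : ℂ)))
            + ∑ j ∈ Finset.univ.erase i, (∑ β : Fin l, b i t β * a j t β) * (c j t * (Complex.cosh (x - X j t) / Complex.sinh (x - X j t) - Complex.cosh z / Complex.sinh z) * Complex.exp (k * x + k ^ 2 * (t : ℂ))) := by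
          rw [hba i t]
          exact congrArg₂ (· + ·) (by ring) (Finset.sum_congr rfl fun j _ => by ring)
  have hG : ∀ i : Fin N,
      (∑ j ∈ Finset.univ.erase i, ((∑ β : Fin l, b i t β * a j t β) * c j t * Complex.exp (k * x + k ^ 2 * (t : ℂ)) * a i t α * ((Complex.cosh (x - X i t) / Complex.sinh (x - X i t) - Complex.cosh z / Complex.sinh z) / Complex.sinh (X i t - X j t) ^ 2 + (Complex.cosh (x - X j t) / Complex.sinh (x - X j t) - Complex.cosh z / Complex.sinh z) / Complex.sinh (x - X i t) ^ 2 - (Complex.cosh (X i t - X j t) / Complex.sinh (X i t - X j t) - Complex.cosh z / Complex.sinh z) / Complex.sinh (x - X i t) ^ 2)))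
        = (Complex.cosh (x - X i t) / Complex.sinh (x - X i t) - Complex.cosh z / Complex.sinh z) * Complex.exp (k * x + k ^ 2 * (t : ℂ)) * a i t α
            * (∑ j ∈ Finset.univ.erase i, (∑ β : Fin l, b i t β * a j t β) * c j t / Complex.sinh (X i t - X j t) ^ 2)
          + a i t α / Complex.sinh (x - X i t) ^ 2
            * (∑ j ∈ Finset.univ.erase i, (∑ β : Fin l, b i t β * a j t β) * (c j t * (Complex.cosh (x - X j t) / Complex.sinh (x - X j t) - Complex.cosh z / Complex.sinh z) * Complex.exp (k * x + k ^ 2 * (t : ℂ))))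
          - Complex.exp (k * x + k ^ 2 * (t : ℂ)) * a i t α / Complex.sinh (x - X i t) ^ 2
            * (∑ j ∈ Finset.univ.erase i, (∑ β : Fin l, b i t β * a j t β) * (Complex.cosh (X i t - X j t) / Complex.sinh (X i t - X j t) - Complex.cosh z / Complex.sinh z) * c j t) := by
    intro i
    rw [Finset.mul_sum, Finset.mul_sum, Finset.mul_sum, ← Finset.sum_add_distrib,
      ← Finset.sum_sub_distrib]
    exact Finset.sum_congr rfl fun j _ => by ring
  have hH : ∀ i : Fin N,
      (∑ j ∈ Finset.univ.erase i, (-(c i t * (Complex.cosh (x - X i t) / Complex.sinh (x - X i t) - Complex.cosh z / Complex.sinh z) * Complex.exp (k * x + k ^ 2 * (t : ℂ)) * ((∑ β : Fin l, b j t β * a i t β) / Complex.sinh (X i t - X j t) ^ 2 * a j t α))))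
        = -(c i t * (Complex.cosh (x - X i t) / Complex.sinh (x - X i t) - Complex.cosh z / Complex.sinh z) * Complex.exp (k * x + k ^ 2 * (t : ℂ)))
            * (∑ j ∈ Finset.univ.erase i, (∑ β : Fin l, b j t β * a i t β) / Complex.sinh (X i t - X j t) ^ 2 * a j t α) := by
    intro i
    rw [Finset.mul_sum]
    exact Finset.sum_congr rfl fun j _ => by ring
  trans (∑ i : Fin N, ∑ j ∈ Finset.univ.erase i, ((∑ β : Fin l, b i t β * a j t β) * c j t * Complex.exp (k * x + k ^ 2 * (t : ℂ)) * a i t α * ((Complex.cosh (x - X i t) / Complex.sinh (x - X i t) - Complex.cosh z / Complex.sinh z) / Complex.sinh (X i t - X j t) ^ 2 + (Complex.cosh (x - X j t) / Complex.sinh (x - X j t) - Complex.cosh z / Complex.sinh z) / Complex.sinh (x - X i t) ^ 2 - (Complex.cosh (X i t - X j t) / Complex.sinh (X i t - X j t) - Complex.cosh z / Complex.sinh z) / Complex.sinh (x - X i t) ^ 2) + -(c i t * (Complex.cosh (x - X i t) / Complex.sinh (x - X i t) - Complex.cosh z / Complex.sinh z) * Complex.exp (k * x + k ^ 2 * (t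 : ℂ)) * ((∑ β : Fin l, b j t β * a i t β) / Complex.sinh (X i t - X j t) ^ 2 * a j t α))))
  · apply Finset.sum_congr rfl
    intro i _
    rw [hsplitPsi i, Finset.sum_add_distrib, hG i, hH i]
    linear_combination (Complex.exp (k * x + k ^ 2 * (t : ℂ)) * a i t α / Complex.sinh (x - X i t) ^ 2) * heig i t
  · have hswap : (∑ i : Fin N, ∑ j ∈ Finset.univ.erase i, (-(c i t * (Complex.cosh (x - X i t) / Complex.sinh (x - X i t) - Complex.cosh z / Complex.sinh z) * Complex.exp (k * x + k ^ 2 * (t : ℂ)) * ((∑ β : Fin l, b j t β * a i t β) / Complex.sinh (X i t - X j t) ^ 2 * a j t α))))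
        = ∑ i : Fin N, ∑ j ∈ Finset.univ.erase i, (-(c j t * (Complex.cosh (x - X j t) / Complex.sinh (x - X j t) - Complex.cosh z / Complex.sinh z) * Complex.exp (k * x + k ^ 2 * (t : ℂ)) * ((∑ β : Fin l, b i t β * a j t β) / Complex.sinh (X j t - X i t) ^ 2 * a i t α))) :=
      erase_sum_swap _
    simp only [Finset.sum_add_distrib]
    rw [hswap]
    simp only [← Finset.sum_add_distrib]
    refine Finset.sum_eq_zero fun i _ => Finset.sum_eq_zero fun j hj => ?_
    have hji : j ≠ i := (Finset.mem_erase.mp hj).1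
    have hij : i ≠ j := hji.symm
    have harg : (x - X j t) - (x - X i t) = X i t - X j t := by ring
    have hkey := trig_key (x - X i t) (x - X j t) (hx i) (hx j)
      (by rw [harg]; exact hXne t i j hij)
    rw [harg] at hkey
    rw [show X j t - X i t = -(X i t - X j t) from by ring, Complex.sinh_neg]
    linear_combination ((∑ β : Fin l, b i t β * a j t β) * c j t * Complex.exp (k * x + k ^ 2 * (t : ℂ)) * a i t α) * hkey
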